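/- Let ℓ(U,V,b) = (1/n) Σ_{i=1}^n log(1 + exp(−y_i (tr(Uᵀ X_i V) + b))). For every fixed U ∈ ℝ^{s×r}, the gradient map (V,b) ↦ (∇_V ℓ(U,V,b), ∇_b ℓ(U,V,b)) is Lipschitz continuous with Lipschitz constant L_v = (√2/n) Σ_{i=1}^n (‖X_iᵀ U‖_F + 1)², where the distance on pairs is ‖(V,b)−(Ṽ,b̃)‖ = √(‖V−Ṽ‖_F² + (b−b̃)²). -/

import Mathlib

open Matrix BigOperators

/-- Frobenius inner product of two real matrices. -/
noncomputable def frobInner {s r : ℕ} (A B : Matrix (Fin s) (Fin r) ℝ) : ℝ :=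
  ∑ i, ∑ j, A i j * B i j

/-- Frobenius norm of a real matrix. -/
noncomputable def frobNorm {s r : ℕ} (A : Matrix (Fin s) (Fin r) ℝ) : ℝ :=
  Real.sqrt (∑ i, ∑ j, (A i j) ^ 2)

/-- The bilinear logistic loss
ℓ(U,V,b) = (1/n) Σᵢ log(1 + exp(−yᵢ (tr(Uᵀ Xᵢ V) + b))). -/
noncomputable def bilinLoss {n s t r : ℕ} (X : Fin n → Matrix (Fin s) (Fin t) ℝ)
    (y : Fin n → ℝ) (U : Matrix (Fin s) (Fin r) ℝ) (V : Matrix (Fin t) (Fin r) ℝ)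
    (b : ℝ) : ℝ :=
  (1 / (n : ℝ)) * ∑ i, Real.log (1 + Real.exp (-(y i) * ((Uᵀ * X i * V).trace + b)))

/-- ∇_U ℓ(U,V,b) = −(1/n) Σᵢ (1 + exp[yᵢ(tr(Uᵀ Xᵢ V) + b)])⁻¹ yᵢ Xᵢ V. -/
noncomputable def gradU {n s t r : ℕ} (X : Fin n → Matrix (Fin s) (Fin t) ℝ)
    (y : Fin n → ℝ) (U : Matrix (Fin s) (Fin r) ℝ) (V : Matrix (Fin t) (Fin r) ℝ)
    (b : ℝ) : Matrix (Fin s) (Fin r) ℝ :=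
  (-(1 / (n : ℝ))) •
    ∑ i, ((1 + Real.exp (y i * ((Uᵀ * X i * V).trace + b)))⁻¹ * y i) • (X i * V)

/-- ∇_b ℓ(U,V,b) = −(1/n) Σᵢ (1 + exp[yᵢ(tr(Uᵀ Xᵢ V) + b)])⁻¹ yᵢ. -/
noncomputable def gradB {n s t r : ℕ} (X : Fin n → Matrix (Fin s) (Fin t) ℝ)
    (y : Fin n → ℝ) (U : Matrix (Fin s) (Fin r) ℝ) (V : Matrix (Fin t) (Fin r) ℝ)
    (b : ℝ) : ℝ :=
  (-(1 / (n : ℝ))) * ∑ i, (1 + Real.exp (y i * ((Uᵀ * X i * V).trace + b)))⁻¹ * y i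

/-- ∇_V ℓ(U,V,b) = −(1/n) Σᵢ (1 + exp[yᵢ(tr(Uᵀ Xᵢ V) + b)])⁻¹ yᵢ Xᵢᵀ U. -/
noncomputable def gradV {n s t r : ℕ} (X : Fin n → Matrix (Fin s) (Fin t) ℝ)
    (y : Fin n → ℝ) (U : Matrix (Fin s) (Fin r) ℝ) (V : Matrix (Fin t) (Fin r) ℝ)
    (b : ℝ) : Matrix (Fin t) (Fin r) ℝ :=
  (-(1 / (n : ℝ))) •
    ∑ i, ((1 + Real.exp (y i * ((Uᵀ * X i * V).trace + b)))⁻¹ * y i) • ((X i)ᵀ * U)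

noncomputable def matToE {s r : ℕ} :
    Matrix (Fin s) (Fin r) ℝ →ₗ[ℝ] EuclideanSpace ℝ (Fin s × Fin r) where
  toFun A := WithLp.toLp 2 (fun p : Fin s × Fin r => A p.1 p.2)
  map_add' := by intros; rfl
  map_smul' := by intros; rfl

lemma frobNorm_eq {s r : ℕ} (A : Matrix (Fin s) (Fin r) ℝ) :
    frobNorm A = ‖matToE A‖ := by
  rw [EuclideanSpace.norm_eq]
  simp [frobNorm, matToE, Fintype.sum_prod_type, sq_abs]
  rfl

lemma frobInner_eq {s r : ℕ} (A B : Matrix (Fin s) (Fin r) ℝ) :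
    frobInner A B = inner ℝ (matToE A) (matToE B) := by
  simp [frobInner, matToE, PiLp.inner_apply, RCLike.inner_apply, Fintype.sum_prod_type, mul_comm]
  rfl

lemma abs_frobInner_le {s r : ℕ} (A B : Matrix (Fin s) (Fin r) ℝ) :
    |frobInner A B| ≤ frobNorm A * frobNorm B := by
  rw [frobInner_eq, frobNorm_eq, frobNorm_eq]
  exact abs_real_inner_le_norm _ _

lemma trace_eq_frobInner {s t r : ℕ} (U : Matrix (Fin s) (Fin r) ℝ)
    (X : Matrix (Fin s) (Fin t) ℝ) (W : Matrix (Fin t) (Fin r) ℝ) :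
    (Uᵀ * X * W).trace = frobInner (Xᵀ * U) W := by
  simp [Matrix.trace, Matrix.diag, Matrix.mul_apply, frobInner, Finset.sum_mul, Finset.mul_sum]
  rw [Finset.sum_comm]
  refine Finset.sum_congr rfl fun k _ => ?_
  apply Finset.sum_congr rfl
  intro j _
  apply Finset.sum_congr rfl
  intro i _
  ring

lemma sig_mono_lip {x z : ℝ} (h : x ≤ z) :
    (1 + Real.exp x)⁻¹ - (1 + Real.exp z)⁻¹ ≤ z - x := by
  have hx := Real.exp_pos x
  have hz := Real.exp_pos z
  have h1 : (0:ℝ) < 1 + Real.exp x := by linarith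
  have h2 : (0:ℝ) < 1 + Real.exp z := by linarith
  have key : Real.exp z - Real.exp x ≤ (z - x) * Real.exp z := by
    have := Real.add_one_le_exp (x - z)
    have hmul : Real.exp (x - z) * Real.exp z = Real.exp x := by
      rw [← Real.exp_add]; ring_nf
    nlinarith
  rw [inv_sub_inv h1.ne' h2.ne', div_le_iff₀ (by positivity)]
  have hzx : 0 ≤ z - x := by linarith
  nlinarith [mul_nonneg hzx hx.le, mul_nonneg (mul_nonneg hzx hx.le) hz.le]

lemma sigmoid_lip (x z : ℝ) :
    |(1 + Real.exp x)⁻¹ - (1 + Real.exp z)⁻¹| ≤ |x - z| := by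
  rcases le_total x z with h | h
  · rw [abs_of_nonneg, abs_of_nonpos (by linarith)]
    · linarith [sig_mono_lip h]
    · have : (1:ℝ) + Real.exp x ≤ 1 + Real.exp z := by
        linarith [Real.exp_le_exp.2 h]
      have := inv_anti₀ (by positivity) this
      linarith
  · rw [abs_sub_comm, abs_sub_comm x z, abs_of_nonneg, abs_of_nonpos (by linarith)]
    · linarith [sig_mono_lip h]
    · have : (1:ℝ) + Real.exp z ≤ 1 + Real.exp x := by
        linarith [Real.exp_le_exp.2 h]
      have := inv_anti₀ (by positivity) this
      linarith

lemma frobInner_sub {s r : ℕ} (A B C : Matrix (Fin s) (Fin r) ℝ) :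
    frobInner A (B - C) = frobInner A B - frobInner A C := by
  simp [frobInner, Matrix.sub_apply, mul_sub, Finset.sum_sub_distrib]

lemma frobNorm_nonneg {s r : ℕ} (A : Matrix (Fin s) (Fin r) ℝ) : 0 ≤ frobNorm A :=
  Real.sqrt_nonneg _

/-- Lemma 1, part (b): for every fixed `U`, the map `(V, b) ↦ (∇_V ℓ, ∇_b ℓ)`
is Lipschitz continuous with constant `L_v = (√2/n) Σᵢ (‖Xᵢᵀ U‖_F + 1)²`,
with respect to the joint Euclidean distance `√(‖V − V'‖_F² + (b − b')²)`. -/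
theorem gradVb_lipschitz
    (n s t r : ℕ) (hn : 0 < n) (hr : 1 ≤ r)
    (X : Fin n → Matrix (Fin s) (Fin t) ℝ) (y : Fin n → ℝ)
    (hy : ∀ i, y i = 1 ∨ y i = -1)
    (U : Matrix (Fin s) (Fin r) ℝ)
    (V V' : Matrix (Fin t) (Fin r) ℝ) (b b' : ℝ) :
    Real.sqrt ((frobNorm (gradV X y U V b - gradV X y U V' b')) ^ 2
        + (gradB X y U V b - gradB X y U V' b') ^ 2)
      ≤ (Real.sqrt 2 / (n : ℝ)) * (∑ i, (frobNorm ((X i)ᵀ * U) + 1) ^ 2)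
          * Real.sqrt ((frobNorm (V - V')) ^ 2 + (b - b') ^ 2) := by
  have hnR : (0:ℝ) < (n:ℝ) := by exact_mod_cast hn
  set A : Fin n → Matrix (Fin t) (Fin r) ℝ := fun i => (X i)ᵀ * U with hA
  set c : Fin n → ℝ :=
    fun i => (1 + Real.exp (y i * ((Uᵀ * X i * V).trace + b)))⁻¹ * y i with hc
  set c' : Fin n → ℝ :=
    fun i => (1 + Real.exp (y i * ((Uᵀ * X i * V').trace + b')))⁻¹ * y i with hc'
  set D := Real.sqrt ((frobNorm (V - V'))^2 + (b - b')^2) with hDdef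
  have hDnn : 0 ≤ D := Real.sqrt_nonneg _
  have hVD : frobNorm (V - V') ≤ D := by
    have h := Real.sqrt_le_sqrt (show (frobNorm (V - V'))^2 ≤
      (frobNorm (V - V'))^2 + (b - b')^2 by nlinarith)
    rwa [Real.sqrt_sq (frobNorm_nonneg _)] at h
  have hbD : |b - b'| ≤ D := by
    have h := Real.sqrt_le_sqrt (show (b - b')^2 ≤
      (frobNorm (V - V'))^2 + (b - b')^2 by nlinarith [frobNorm_nonneg (V - V')])
    rwa [Real.sqrt_sq_eq_abs] at h
  -- per-sample bound
  have hd : ∀ i, |c i - c' i| ≤ (frobNorm (A i) + 1) * D := by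
    intro i
    have hy1 : |y i| = 1 := by rcases hy i with h | h <;> simp [h]
    have e1 : c i - c' i =
        ((1 + Real.exp (y i * ((Uᵀ * X i * V).trace + b)))⁻¹
          - (1 + Real.exp (y i * ((Uᵀ * X i * V').trace + b')))⁻¹) * y i := by
      simp [hc, hc']; ring
    have h1 : |c i - c' i| ≤
        |y i * ((Uᵀ * X i * V).trace + b) - y i * ((Uᵀ * X i * V').trace + b')| := by
      rw [e1, abs_mul, hy1, mul_one]
      exact sigmoid_lip _ _
    have e2 : y i * ((Uᵀ * X i * V).trace + b) - y i * ((Uᵀ * X i * V').trace + b')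
        = y i * (((Uᵀ * X i * V).trace - (Uᵀ * X i * V').trace) + (b - b')) := by ring
    have e3 : (Uᵀ * X i * V).trace - (Uᵀ * X i * V').trace = frobInner (A i) (V - V') := by
      rw [trace_eq_frobInner, trace_eq_frobInner, frobInner_sub]
    have h2 : |c i - c' i| ≤ |frobInner (A i) (V - V')| + |b - b'| := by
      rw [e2, e3] at h1
      calc |c i - c' i| ≤ |y i| * |frobInner (A i) (V - V') + (b - b')| := by
            rw [← abs_mul]; exact h1
        _ = |frobInner (A i) (V - V') + (b - b')| := by rw [hy1, one_mul]
        _ ≤ |frobInner (A i) (V - V')| + |b - b'| := abs_add_le _ _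
    have h3 : |frobInner (A i) (V - V')| ≤ frobNorm (A i) * D :=
      le_trans (abs_frobInner_le _ _)
        (mul_le_mul_of_nonneg_left hVD (frobNorm_nonneg _))
    calc |c i - c' i| ≤ frobNorm (A i) * D + |b - b'| := by linarith
      _ ≤ frobNorm (A i) * D + D := by linarith
      _ = (frobNorm (A i) + 1) * D := by ring
  -- gradV difference
  have hgV : gradV X y U V b - gradV X y U V' b'
      = (-(1 / (n:ℝ))) • ∑ i, (c i - c' i) • A i := by
    simp only [gradV, ← smul_sub, ← Finset.sum_sub_distrib, sub_smul]
    rfl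
  have hgB : gradB X y U V b - gradB X y U V' b'
      = (-(1 / (n:ℝ))) * ∑ i, (c i - c' i) := by
    simp only [gradB, ← mul_sub, ← Finset.sum_sub_distrib]
    rfl
  set P := frobNorm (gradV X y U V b - gradV X y U V' b') with hP
  set Q := |gradB X y U V b - gradB X y U V' b'| with hQ
  have hPnn : 0 ≤ P := frobNorm_nonneg _
  have hQnn : 0 ≤ Q := abs_nonneg _
  have hPbd : P ≤ (1 / (n:ℝ)) * ∑ i, |c i - c' i| * frobNorm (A i) := by
    rw [hP, hgV, frobNorm_eq, _root_.map_smul, map_sum]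
    rw [norm_smul]
    simp only [norm_neg, Real.norm_eq_abs, abs_neg, abs_of_nonneg (by positivity : (0:ℝ) ≤ 1 / (n:ℝ))]
    refine mul_le_mul_of_nonneg_left ?_ (by positivity)
    refine le_trans (norm_sum_le _ _) ?_
    apply Finset.sum_le_sum
    intro i _
    rw [_root_.map_smul, norm_smul, Real.norm_eq_abs, frobNorm_eq]
  have hQbd : Q ≤ (1 / (n:ℝ)) * ∑ i, |c i - c' i| := by
    rw [hQ, hgB, abs_mul, abs_neg, abs_of_nonneg (by positivity : (0:ℝ) ≤ 1 / (n:ℝ))]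
    refine mul_le_mul_of_nonneg_left (Finset.abs_sum_le_sum_abs _ _) (by positivity)
  have hsum : P + Q ≤ (1 / (n:ℝ)) * ∑ i, (frobNorm (A i) + 1)^2 * D := by
    have : P + Q ≤ (1 / (n:ℝ)) * ∑ i, (|c i - c' i| * frobNorm (A i) + |c i - c' i|) := by
      rw [Finset.sum_add_distrib, mul_add]
      exact add_le_add hPbd hQbd
    refine le_trans this ?_
    refine mul_le_mul_of_nonneg_left (Finset.sum_le_sum fun i _ => ?_) (by positivity)
    have hai : 0 ≤ frobNorm (A i) := frobNorm_nonneg _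
    calc |c i - c' i| * frobNorm (A i) + |c i - c' i|
        = |c i - c' i| * (frobNorm (A i) + 1) := by ring
      _ ≤ ((frobNorm (A i) + 1) * D) * (frobNorm (A i) + 1) :=
          mul_le_mul_of_nonneg_right (hd i) (by linarith)
      _ = (frobNorm (A i) + 1)^2 * D := by ring
  have hsqrt : Real.sqrt (P^2 + Q^2) ≤ P + Q := by
    have h := Real.sqrt_le_sqrt (show P^2 + Q^2 ≤ (P + Q)^2 by nlinarith)
    rwa [Real.sqrt_sq (by linarith)] at h
  have hone : (1:ℝ) ≤ Real.sqrt 2 := by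
    nlinarith [Real.sq_sqrt (by norm_num : (0:ℝ) ≤ 2), Real.sqrt_nonneg 2]
  have hQ2 : (gradB X y U V b - gradB X y U V' b')^2 = Q^2 := (sq_abs _).symm
  rw [hQ2]
  refine le_trans hsqrt (le_trans hsum ?_)
  rw [← Finset.sum_mul, ← mul_assoc]
  have hsnn : 0 ≤ ∑ i, (frobNorm (A i) + 1)^2 := Finset.sum_nonneg fun i _ => sq_nonneg _
  have : (1 / (n:ℝ)) * ∑ i, (frobNorm (A i) + 1)^2
      ≤ Real.sqrt 2 / (n:ℝ) * ∑ i, (frobNorm (A i) + 1)^2 := by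
    refine mul_le_mul_of_nonneg_right ?_ hsnn
    exact div_le_div_of_nonneg_right hone hnR.le
  exact mul_le_mul_of_nonneg_right this hDnn
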